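/- Let ∂L denote the 2d×2d matrix (1/v̂_d)·E_{1,d} (the derivative of L^{E,d}(x) with respect to E) and ∂A the 2d×2d block matrix (C_d^{-1}, 0; 0, 0) (the derivative of A^{E,d}(x) with respect to E). Then for all real E, x, α: L^{E,d}(x)* S_d ∂L = E_{d,d} and A^{E,d}(x)* S_d ∂A = (I_d, 0; 0, 0). Consequently, for every unit vector v = (v₁,…,v_{2d}) ∈ ℂ^{2d}: v* L^{E,d}(x)* S_d ∂L v = |v_d|² ∈ [0,1] and v* A^{E,d}(x)* S_d ∂A v = Σ_{i=1}^{d} |v_i|² ∈ [0,1]. -/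

import Mathlib

open scoped BigOperators Matrix

/-- The horizontal strip `S_h = {z : |Im z| < h}`. -/
def strip (h : ℝ) : Set ℂ := {z : ℂ | |z.im| < h}

/-- The spectral (operator) norm of a rectangular complex matrix. -/
noncomputable def specNorm {m n : ℕ} (M : Matrix (Fin m) (Fin n) ℂ) : ℝ :=
  ‖LinearMap.toContinuousLinearMap (Matrix.toEuclideanLin M)‖

/-- Identification `Fin d ⊕ Fin d ≃ Fin (2d)`. -/
def sumEquiv (d : ℕ) : Fin d ⊕ Fin d ≃ Fin (2 * d) :=
  finSumFinEquiv.trans (finCongr (by omega))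

/-- The upper-triangular matrix `C_d` with `(C_d)_{ij} = v̂_{d-(j-i)}` for `j ≥ i`. -/
noncomputable def Cdmat (d : ℕ) (vhat : ℤ → ℂ) : Matrix (Fin d) (Fin d) ℂ :=
  Matrix.of fun i j => if (i : ℕ) ≤ (j : ℕ) then vhat ((d : ℤ) - ((j : ℤ) - (i : ℤ))) else 0

/-- The structure matrix `S_d = (0, -C_d*; C_d, 0)`. -/
noncomputable def Smat (d : ℕ) (vhat : ℤ → ℂ) : Matrix (Fin (2 * d)) (Fin (2 * d)) ℂ :=
  Matrix.reindex (sumEquiv d) (sumEquiv d)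
    (Matrix.fromBlocks 0 (-(Cdmat d vhat)ᴴ) (Cdmat d vhat) 0)

/-- The standard symplectic matrix `𝒥_{2d} = (0, I_d; -I_d, 0)`. -/
noncomputable def Jmat (d : ℕ) : Matrix (Fin (2 * d)) (Fin (2 * d)) ℂ :=
  Matrix.reindex (sumEquiv d) (sumEquiv d) (Matrix.fromBlocks 0 1 (-1) 0)

/-- The long-range transfer matrix `L^{E,d}(z)`. -/
noncomputable def Lmat (d : ℕ) (vhat : ℤ → ℂ) (E : ℂ) (z : ℂ) :
    Matrix (Fin (2 * d)) (Fin (2 * d)) ℂ :=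
  Matrix.of fun r c =>
    if (r : ℕ) = 0 then
      (vhat d)⁻¹ *
        ((if (c : ℕ) = d - 1 then E - 2 * Complex.cos (2 * Real.pi * z) else 0)
          - vhat ((d : ℤ) - 1 - (c : ℤ)))
    else if (c : ℕ) + 1 = (r : ℕ) then 1 else 0

/-- The dual potential matrix `V_d(x)`. -/
noncomputable def Vdmat (d : ℕ) (vhat : ℤ → ℂ) (α x : ℝ) : Matrix (Fin d) (Fin d) ℂ :=
  Matrix.of fun i j =>
    if i = j then 2 * Complex.cos (2 * Real.pi * ((x : ℂ) + (i : ℕ) * (α : ℂ)))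
    else vhat ((i : ℤ) - (j : ℤ))

/-- The dual cocycle matrix `A^{E,d}(x) = (C_d⁻¹(E - V_d(x)), -C_d⁻¹C_d*; I, 0)`. -/
noncomputable def Amat (d : ℕ) (vhat : ℤ → ℂ) (α x : ℝ) (E : ℂ) :
    Matrix (Fin (2 * d)) (Fin (2 * d)) ℂ :=
  Matrix.reindex (sumEquiv d) (sumEquiv d)
    (Matrix.fromBlocks
      ((Cdmat d vhat)⁻¹ * (E • (1 : Matrix (Fin d) (Fin d) ℂ) - Vdmat d vhat α x))
      (-((Cdmat d vhat)⁻¹ * (Cdmat d vhat)ᴴ))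
      1 0)

lemma sumEquiv_inl (d : ℕ) (i : Fin d) : ((sumEquiv d) (Sum.inl i) : ℕ) = i := by
  simp [sumEquiv]

lemma sumEquiv_inr (d : ℕ) (i : Fin d) : ((sumEquiv d) (Sum.inr i) : ℕ) = d + i := by
  simp [sumEquiv]; omega

lemma sumEquiv_symm_apply (d : ℕ) (k : Fin (2 * d)) :
    (sumEquiv d).symm k =
      if h : (k : ℕ) < d then Sum.inl ⟨k, h⟩ else Sum.inr ⟨(k : ℕ) - d, by omega⟩ := by
  rw [Equiv.symm_apply_eq]
  split
  · apply Fin.ext; simp [sumEquiv_inl]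
  · apply Fin.ext; rw [sumEquiv_inr]; simp; omega

lemma Cdmat_det (d : ℕ) (vhat : ℤ → ℂ) : (Cdmat d vhat).det = (vhat d) ^ d := by
  rw [Matrix.det_of_upperTriangular]
  · simp [Cdmat]
  · intro i j h
    simp only [Function.id_def] at h
    simp only [Cdmat, Matrix.of_apply, ite_eq_right_iff]
    intro hle
    exact absurd hle (by omega)

lemma Cdmat_mul_inv (d : ℕ) (vhat : ℤ → ℂ) (hvd : vhat (d : ℤ) ≠ 0) :
    Cdmat d vhat * (Cdmat d vhat)⁻¹ = 1 := by
  apply Matrix.mul_nonsing_inv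
  rw [Cdmat_det]
  exact (pow_ne_zero _ hvd).isUnit

lemma Smat_col0 (d : ℕ) (hd : 1 ≤ d) (vhat : ℤ → ℂ) (i : Fin (2 * d)) :
    Smat d vhat i ⟨0, by have _h := 0; omega⟩ = if (i : ℕ) = d then vhat d else 0 := by
  rw [Smat, Matrix.reindex_apply, Matrix.submatrix_apply, sumEquiv_symm_apply,
    sumEquiv_symm_apply]
  rw [dif_pos (show ((⟨0, by have _h := 0; omega⟩ : Fin (2 * d)) : ℕ) < d by show 0 < d; omega)]
  split
  · rename_i h
    rw [Matrix.fromBlocks_apply₁₁]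
    simp only [Matrix.zero_apply]
    rw [if_neg (by have _h := 0; omega)]
  · rename_i h
    rw [Matrix.fromBlocks_apply₂₁]
    simp only [Cdmat, Matrix.of_apply]
    by_cases hc : (i : ℕ) = d
    · rw [if_pos (by simp; omega), if_pos hc]
      congr 1
      simp
      omega
    · rw [if_neg (by simp; omega), if_neg hc]

lemma SL (d : ℕ) (hd : 1 ≤ d) (vhat : ℤ → ℂ) (hvd : vhat (d : ℤ) ≠ 0) :
    Smat d vhat * ((vhat (d : ℤ))⁻¹ • Matrix.single
        (⟨0, by have _h := 0; omega⟩ : Fin (2 * d)) (⟨d - 1, by have _h := 0; omega⟩ : Fin (2 * d)) (1 : ℂ))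
      = Matrix.single (⟨d, by have _h := 0; omega⟩ : Fin (2 * d))
          (⟨d - 1, by have _h := 0; omega⟩ : Fin (2 * d)) (1 : ℂ) := by
  ext i j
  rw [Matrix.mul_apply]
  simp only [Matrix.smul_apply, Matrix.single, Matrix.of_apply, smul_ite, smul_eq_mul,
    mul_one, smul_zero, ite_and, mul_ite, mul_zero]
  rw [Finset.sum_ite_eq, if_pos (Finset.mem_univ _), Smat_col0 d hd vhat]
  split_ifs with h1 h2 h3
  all_goals try exact mul_inv_cancel₀ hvd
  all_goals try rfl
  all_goals try exact zero_mul _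
  all_goals (exfalso; simp only [Fin.ext_iff, Fin.val_mk] at *)
  all_goals omega

lemma LSL (d : ℕ) (hd : 1 ≤ d) (vhat : ℤ → ℂ) (E z : ℂ) :
    (Lmat d vhat E z)ᴴ * Matrix.single (⟨d, by have _h := 0; omega⟩ : Fin (2 * d))
        (⟨d - 1, by have _h := 0; omega⟩ : Fin (2 * d)) (1 : ℂ)
      = Matrix.single (⟨d - 1, by have _h := 0; omega⟩ : Fin (2 * d))
          (⟨d - 1, by have _h := 0; omega⟩ : Fin (2 * d)) (1 : ℂ) := by
  ext i j
  rw [Matrix.mul_apply]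
  simp only [Matrix.single, Matrix.of_apply, Matrix.conjTranspose_apply, ite_and,
    mul_ite, mul_one, mul_zero]
  rw [Finset.sum_ite_eq, if_pos (Finset.mem_univ _)]
  have hL : Lmat d vhat E z ⟨d, by have _h := 0; omega⟩ i = if (i : ℕ) + 1 = d then 1 else 0 := by
    rw [Lmat, Matrix.of_apply, if_neg (by show ¬ (d = 0); omega)]
  rw [hL]
  split_ifs with h1 h2 h3 <;>
    first
      | rfl
      | (simp only [star_one, star_zero]; done)
      | (exfalso; simp_all only [Fin.ext_iff, Fin.val_mk]; omega)
      | (simp only [star_one, star_zero]; exfalso;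
         simp_all only [Fin.ext_iff, Fin.val_mk]; omega)

lemma ASA (d : ℕ) (vhat : ℤ → ℂ) (hvd : vhat (d : ℤ) ≠ 0) (α x : ℝ) (E : ℂ) :
    (Amat d vhat α x E)ᴴ * Smat d vhat *
        (Matrix.reindex (sumEquiv d) (sumEquiv d)
          (Matrix.fromBlocks ((Cdmat d vhat)⁻¹) 0 0 0))
      = Matrix.reindex (sumEquiv d) (sumEquiv d)
          (Matrix.fromBlocks (1 : Matrix (Fin d) (Fin d) ℂ) 0 0 0) := by
  rw [Amat, Smat]
  simp only [Matrix.reindex_apply, Matrix.conjTranspose_submatrix, Matrix.submatrix_mul_equiv]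
  congr 1
  rw [Matrix.fromBlocks_conjTranspose, Matrix.fromBlocks_multiply, Matrix.fromBlocks_multiply]
  simp only [Matrix.mul_zero, Matrix.zero_mul, Matrix.mul_one, Matrix.one_mul, add_zero,
    zero_add, Matrix.conjTranspose_one, Matrix.conjTranspose_zero,
    Cdmat_mul_inv d vhat hvd]

lemma qL (d : ℕ) (hd : 1 ≤ d) (v : Fin (2 * d) → ℂ) :
    star v ⬝ᵥ (Matrix.single (⟨d - 1, by have _h := 0; omega⟩ : Fin (2 * d))
        (⟨d - 1, by have _h := 0; omega⟩ : Fin (2 * d)) (1 : ℂ)).mulVec v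
      = ((‖v ⟨d - 1, by have _h := 0; omega⟩‖ ^ 2 : ℝ) : ℂ) := by
  have hm : (Matrix.single (⟨d - 1, by have _h := 0; omega⟩ : Fin (2 * d))
      (⟨d - 1, by have _h := 0; omega⟩ : Fin (2 * d)) (1 : ℂ)).mulVec v
      = fun k => if (⟨d - 1, by have _h := 0; omega⟩ : Fin (2 * d)) = k then v ⟨d - 1, by have _h := 0; omega⟩ else 0 := by
    funext k
    rw [Matrix.mulVec, dotProduct]
    simp only [Matrix.single, Matrix.of_apply, ite_and, ite_mul, one_mul, zero_mul]
    split
    · rw [Finset.sum_ite_eq, if_pos (Finset.mem_univ _)]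
    · exact Finset.sum_const_zero
  rw [hm, dotProduct]
  simp only [Pi.star_apply, mul_ite, mul_zero]
  rw [Finset.sum_ite_eq, if_pos (Finset.mem_univ _)]
  rw [← Complex.normSq_eq_norm_sq, ← Complex.mul_conj]
  rw [mul_comm]; rfl

lemma qA (d : ℕ) (hd : 1 ≤ d) (vhat : ℤ → ℂ) (v : Fin (2 * d) → ℂ) :
    star v ⬝ᵥ ((Matrix.reindex (sumEquiv d) (sumEquiv d)
        (Matrix.fromBlocks (1 : Matrix (Fin d) (Fin d) ℂ) 0 0 0)).mulVec v)
      = (((∑ i : Fin d, ‖v (Fin.castLE (by have _h := 0; omega) i)‖ ^ 2 : ℝ)) : ℂ) := by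
  have hN : ∀ i j : Fin (2 * d), (Matrix.reindex (sumEquiv d) (sumEquiv d)
      (Matrix.fromBlocks (1 : Matrix (Fin d) (Fin d) ℂ) 0 0 0)) i j
      = if i = j ∧ (i : ℕ) < d then 1 else 0 := by
    intro i j
    rw [Matrix.reindex_apply, Matrix.submatrix_apply, sumEquiv_symm_apply, sumEquiv_symm_apply]
    by_cases hi : (i : ℕ) < d <;> by_cases hj : (j : ℕ) < d
    · rw [dif_pos hi, dif_pos hj, Matrix.fromBlocks_apply₁₁, Matrix.one_apply]
      simp [Fin.ext_iff, hi]
    · rw [dif_pos hi, dif_neg hj, Matrix.fromBlocks_apply₁₂]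
      simp only [Matrix.zero_apply]
      rw [if_neg (by rintro ⟨rfl, _⟩; exact hj hi)]
    · rw [dif_neg hi, dif_pos hj, Matrix.fromBlocks_apply₂₁]
      simp only [Matrix.zero_apply]
      rw [if_neg (by rintro ⟨rfl, h⟩; exact hi h)]
    · rw [dif_neg hi, dif_neg hj, Matrix.fromBlocks_apply₂₂]
      simp only [Matrix.zero_apply]
      rw [if_neg (by rintro ⟨rfl, h⟩; exact hi h)]
  rw [dotProduct]
  have hrow : ∀ i : Fin (2 * d),
      star (v i) * (Matrix.reindex (sumEquiv d) (sumEquiv d)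
        (Matrix.fromBlocks (1 : Matrix (Fin d) (Fin d) ℂ) 0 0 0)).mulVec v i
      = if (i : ℕ) < d then star (v i) * v i else 0 := by
    intro i
    rw [Matrix.mulVec, dotProduct]
    rw [Finset.sum_congr rfl (fun j _ => by rw [hN i j])]
    simp only [ite_and, ite_mul, one_mul, zero_mul]
    rw [Finset.sum_ite_eq, if_pos (Finset.mem_univ _)]
    split <;> simp
  simp only [dotProduct, Pi.star_apply]
  rw [Finset.sum_congr rfl (fun i _ => hrow i)]
  rw [← Equiv.sum_comp (sumEquiv d)
    (fun i => if (i : ℕ) < d then star (v i) * v i else 0)]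
  rw [Fintype.sum_sum_type]
  have h2 : ∀ i : Fin d, (if ((sumEquiv d (Sum.inr i)) : ℕ) < d
      then star (v (sumEquiv d (Sum.inr i))) * v (sumEquiv d (Sum.inr i)) else 0) = 0 :=
    fun i => by rw [if_neg (by rw [sumEquiv_inr]; omega)]
  have h1 : ∀ i : Fin d, (if ((sumEquiv d (Sum.inl i)) : ℕ) < d
      then star (v (sumEquiv d (Sum.inl i))) * v (sumEquiv d (Sum.inl i)) else 0)
      = ((‖v (Fin.castLE (by have _h := 0; omega : d ≤ 2 * d) i)‖ ^ 2 : ℝ) : ℂ) := fun i => by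
    have he : sumEquiv d (Sum.inl i) = Fin.castLE (by have _h := 0; omega : d ≤ 2 * d) i :=
      Fin.ext (by rw [sumEquiv_inl]; rfl)
    rw [if_pos (by rw [sumEquiv_inl]; omega), he, ← Complex.normSq_eq_norm_sq, ← Complex.mul_conj]
    rw [mul_comm]; rfl
  rw [Finset.sum_congr rfl fun i _ => h2 i, Finset.sum_const_zero, add_zero,
    Finset.sum_congr rfl fun i _ => h1 i]
  push_cast
  rfl

/-- Monotonicity structure of the energy derivative of the long-range cocycle:
`L* S_d ∂L = E_{d,d}` and `A* S_d ∂A = (I_d,0;0,0)`, and for unit vectors the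
associated quadratic forms are `|v_d|²` resp. `Σ_{i=1}^d |v_i|²`, both in `[0,1]`. -/
theorem longrange_cocycle_premonotone
    (d : ℕ) (hd : 1 ≤ d)
    (vhat : ℤ → ℂ) (hv : ∀ k : ℤ, vhat (-k) = starRingEnd ℂ (vhat k))
    (hvd : vhat (d : ℤ) ≠ 0) :
    ∀ E x α : ℝ,
      (Lmat d vhat (E : ℂ) (x : ℂ))ᴴ * Smat d vhat *
          ((vhat (d : ℤ))⁻¹ • Matrix.single
            (⟨0, by omega⟩ : Fin (2 * d)) (⟨d - 1, by omega⟩ : Fin (2 * d)) (1 : ℂ))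
        = Matrix.single
            (⟨d - 1, by omega⟩ : Fin (2 * d)) (⟨d - 1, by omega⟩ : Fin (2 * d)) (1 : ℂ) ∧
      (Amat d vhat α x (E : ℂ))ᴴ * Smat d vhat *
          (Matrix.reindex (sumEquiv d) (sumEquiv d)
            (Matrix.fromBlocks ((Cdmat d vhat)⁻¹) 0 0 0))
        = Matrix.reindex (sumEquiv d) (sumEquiv d)
            (Matrix.fromBlocks (1 : Matrix (Fin d) (Fin d) ℂ) 0 0 0) ∧
      ∀ v : Fin (2 * d) → ℂ, (∑ i, ‖v i‖ ^ 2) = 1 →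
        (star v ⬝ᵥ (((Lmat d vhat (E : ℂ) (x : ℂ))ᴴ * Smat d vhat *
            ((vhat (d : ℤ))⁻¹ • Matrix.single
              (⟨0, by omega⟩ : Fin (2 * d)) (⟨d - 1, by omega⟩ : Fin (2 * d)) (1 : ℂ))).mulVec v)
          = ((‖v ⟨d - 1, by omega⟩‖ ^ 2 : ℝ) : ℂ)) ∧
        ‖v ⟨d - 1, by omega⟩‖ ^ 2 ≤ 1 ∧
        0 ≤ ‖v ⟨d - 1, by omega⟩‖ ^ 2 ∧
        (star v ⬝ᵥ (((Amat d vhat α x (E : ℂ))ᴴ * Smat d vhat *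
            (Matrix.reindex (sumEquiv d) (sumEquiv d)
              (Matrix.fromBlocks ((Cdmat d vhat)⁻¹) 0 0 0))).mulVec v)
          = (((∑ i : Fin d, ‖v (Fin.castLE (by omega) i)‖ ^ 2 : ℝ)) : ℂ)) ∧
        (∑ i : Fin d, ‖v (Fin.castLE (by omega) i)‖ ^ 2) ≤ 1 ∧
        0 ≤ ∑ i : Fin d, ‖v (Fin.castLE (by omega) i)‖ ^ 2 := by
  intro E x α
  have hL : (Lmat d vhat (E : ℂ) (x : ℂ))ᴴ * Smat d vhat *
      ((vhat (d : ℤ))⁻¹ • Matrix.single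
        (⟨0, by omega⟩ : Fin (2 * d)) (⟨d - 1, by omega⟩ : Fin (2 * d)) (1 : ℂ))
      = Matrix.single
        (⟨d - 1, by omega⟩ : Fin (2 * d)) (⟨d - 1, by omega⟩ : Fin (2 * d)) (1 : ℂ) := by
    rw [Matrix.mul_assoc, SL d hd vhat hvd, LSL d hd vhat]
  have hA := ASA d vhat hvd α x (E : ℂ)
  refine ⟨hL, hA, fun v hv => ?_⟩
  have hb1 : ‖v ⟨d - 1, by omega⟩‖ ^ 2 ≤ 1 :=
    hv ▸ Finset.single_le_sum (fun i _ => sq_nonneg (‖v i‖)) (Finset.mem_univ _)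
  have hb2 : (∑ i : Fin d, ‖v (Fin.castLE (by omega) i)‖ ^ 2) ≤ 1 := by
    have hmap : (∑ i : Fin d, ‖v (Fin.castLE (by omega : d ≤ 2 * d) i)‖ ^ 2)
        = ∑ j ∈ Finset.univ.map (Fin.castLEEmb (by omega : d ≤ 2 * d)),
            ‖v j‖ ^ 2 := by
      rw [Finset.sum_map]
      rfl
    rw [hmap, ← hv]
    exact Finset.sum_le_sum_of_subset_of_nonneg (Finset.subset_univ _)
      (fun i _ _ => sq_nonneg _)
  refine ⟨?_, hb1, sq_nonneg _, ?_, hb2, Finset.sum_nonneg fun i _ => sq_nonneg _⟩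
  · rw [hL]
    exact qL d hd v
  · rw [hA]
    exact qA d hd vhat v
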